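/- A vector θ* ∈ ℝ^n solves the ℓ1 problem (i.e., ‖φ(θ*)‖₁ ≤ ‖φ(θ)‖₁ for all θ ∈ ℝ^n) if and only if for every η ∈ ℝ^n, |Σ_{t ∈ I⁺(θ*)} ⟨η, x_t⟩ − Σ_{t ∈ I⁻(θ*)} ⟨η, x_t⟩| ≤ Σ_{t ∈ I⁰(θ*)} |⟨η, x_t⟩| (with the convention that an empty sum equals zero). -/

import Mathlib

open Matrix Finset

private lemma sum_split3 {N : ℕ} (p q g : Fin N → ℝ) :
    ∑ t, g t = (∑ t ∈ univ.filter (fun t => p t = q t), g t)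
      + (∑ t ∈ univ.filter (fun t => p t > q t), g t)
      + (∑ t ∈ univ.filter (fun t => p t < q t), g t) := by
  classical
  rw [add_assoc, ← Finset.sum_filter_add_sum_filter_not univ (fun t => p t = q t) g]
  congr 1
  rw [← Finset.sum_filter_add_sum_filter_not (univ.filter (fun t => ¬ p t = q t))
    (fun t => p t > q t) g]
  congr 1
  · apply Finset.sum_congr _ (fun _ _ => rfl)
    ext t
    simp only [mem_filter, mem_univ, true_and]
    exact ⟨fun h => h.2, fun h => ⟨ne_of_gt h, h⟩⟩
  · apply Finset.sum_congr _ (fun _ _ => rfl)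
    ext t
    simp only [mem_filter, mem_univ, true_and, not_lt]
    exact ⟨fun h => lt_of_le_of_ne h.2 h.1, fun h => ⟨ne_of_lt h, le_of_lt h⟩⟩

/-- `θ*` solves the ℓ1 problem iff for every `η ∈ ℝ^n`,
`|∑_{t ∈ I⁺(θ*)} ⟨η,x_t⟩ − ∑_{t ∈ I⁻(θ*)} ⟨η,x_t⟩| ≤ ∑_{t ∈ I⁰(θ*)} |⟨η,x_t⟩|`. -/
theorem stmt3 (n N : ℕ) (hn : 1 ≤ n) (hN : 1 ≤ N)
    (x : Fin N → Fin n → ℝ) (y : Fin N → ℝ) (θs : Fin n → ℝ) :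
    (∀ θ : Fin n → ℝ, ∑ t, |y t - x t ⬝ᵥ θs| ≤ ∑ t, |y t - x t ⬝ᵥ θ|) ↔
      (∀ η : Fin n → ℝ,
        |(∑ t ∈ univ.filter (fun t => x t ⬝ᵥ θs > y t), η ⬝ᵥ x t)
          - (∑ t ∈ univ.filter (fun t => x t ⬝ᵥ θs < y t), η ⬝ᵥ x t)|
          ≤ ∑ t ∈ univ.filter (fun t => x t ⬝ᵥ θs = y t), |η ⬝ᵥ x t|) := by
  classical
  constructor
  · intro hopt
    have key : ∀ v : Fin n → ℝ,
        0 ≤ (∑ t ∈ univ.filter (fun t => x t ⬝ᵥ θs > y t), v ⬝ᵥ x t)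
            - (∑ t ∈ univ.filter (fun t => x t ⬝ᵥ θs < y t), v ⬝ᵥ x t)
            + ∑ t ∈ univ.filter (fun t => x t ⬝ᵥ θs = y t), |v ⬝ᵥ x t| := by
      intro v
      set φ : Fin N → ℝ := fun t => y t - x t ⬝ᵥ θs with hφdef
      set a : Fin N → ℝ := fun t => v ⬝ᵥ x t with hadef
      have hNe : (univ : Finset (Fin N)).Nonempty := ⟨⟨0, hN⟩, mem_univ _⟩
      set g : Fin N → ℝ := fun t => if φ t = 0 then 1 else |φ t| / (|a t| + 1) with hgdef
      have hgpos : ∀ t, 0 < g t := by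
        intro t
        by_cases h : φ t = 0
        · simp [hgdef, h]
        · have h1 : 0 < |φ t| := abs_pos.mpr h
          have h2 : 0 < |a t| + 1 := by positivity
          simp only [hgdef, if_neg h]
          positivity
      set ε := univ.inf' hNe g with hεdef
      have hεpos : 0 < ε := by
        rw [hεdef, Finset.lt_inf'_iff]
        exact fun t _ => hgpos t
      have hεle : ∀ t, φ t ≠ 0 → ε * |a t| < |φ t| := by
        intro t ht
        have h1 : ε ≤ g t := Finset.inf'_le g (mem_univ t)
        rw [hgdef] at h1
        simp only [if_neg ht] at h1
        have h2 : (0:ℝ) < |a t| + 1 := by positivity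
        have h3 : ε * (|a t| + 1) ≤ |φ t| := (le_div_iff₀ h2).mp h1
        nlinarith
      set c : Fin N → ℝ := fun t =>
        if x t ⬝ᵥ θs = y t then |a t| else if y t < x t ⬝ᵥ θs then a t else -a t with hcdef
      have hpoint : ∀ t, |y t - x t ⬝ᵥ (θs + ε • v)| = |φ t| + ε * c t := by
        intro t
        have hd : x t ⬝ᵥ (θs + ε • v) = x t ⬝ᵥ θs + ε * a t := by
          rw [dotProduct_add]
          congr 1
          rw [hadef, dotProduct_comm]
          simp [dotProduct, Finset.mul_sum]
          ring_nf
        rw [hd]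
        have habs1 : ε * a t ≤ ε * |a t| :=
          mul_le_mul_of_nonneg_left (le_abs_self _) hεpos.le
        have habs2 : -(ε * |a t|) ≤ ε * a t := by
          have := mul_le_mul_of_nonneg_left (neg_abs_le (a t)) hεpos.le
          linarith
        rcases lt_trichotomy (x t ⬝ᵥ θs) (y t) with h | h | h
        · -- φ t > 0, c t = -a t
          have hφpos : 0 < φ t := by simp only [hφdef]; linarith
          have hlt := hεle t (ne_of_gt hφpos)
          have h1 : y t - (x t ⬝ᵥ θs + ε * a t) = φ t - ε * a t := by
            simp only [hφdef]; ring
          rw [h1, abs_of_pos (by linarith [abs_of_pos hφpos]), abs_of_pos hφpos,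
            hcdef]
          simp only [if_neg (ne_of_lt h), if_neg (not_lt.mpr h.le)]
          ring
        · -- φ t = 0, c t = |a t|
          have h1 : y t - (x t ⬝ᵥ θs + ε * a t) = -(ε * a t) := by rw [← h]; ring
          have h2 : φ t = 0 := by simp only [hφdef, ← h]; ring
          rw [h1, abs_neg, abs_mul, abs_of_pos hεpos, h2, abs_zero]
          simp only [hcdef]
          rw [if_pos h]
          ring
        · -- φ t < 0, c t = a t
          have hφneg : φ t < 0 := by simp only [hφdef]; linarith
          have hlt := hεle t (ne_of_lt hφneg)
          rw [abs_of_neg hφneg] at hlt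
          have h1 : y t - (x t ⬝ᵥ θs + ε * a t) = φ t - ε * a t := by
            simp only [hφdef]; ring
          rw [h1, abs_of_neg (by linarith), abs_of_neg hφneg]
          simp only [hcdef]
          rw [if_neg (ne_of_gt h), if_pos h]
          ring
      have hsum := hopt (θs + ε • v)
      rw [show (∑ t, |y t - x t ⬝ᵥ (θs + ε • v)|) = ∑ t, (|φ t| + ε * c t) from
        Finset.sum_congr rfl fun t _ => hpoint t] at hsum
      rw [Finset.sum_add_distrib, ← Finset.mul_sum] at hsum
      have hφeq : (∑ t, |y t - x t ⬝ᵥ θs|) = ∑ t, |φ t| := rfl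
      rw [hφeq] at hsum
      have hc0 : 0 ≤ ∑ t, c t := by
        by_contra hneg
        push_neg at hneg
        nlinarith
      rw [sum_split3 (fun t => x t ⬝ᵥ θs) y c] at hc0
      have e1 : (∑ t ∈ univ.filter (fun t => x t ⬝ᵥ θs = y t), c t)
          = ∑ t ∈ univ.filter (fun t => x t ⬝ᵥ θs = y t), |a t| := by
        apply Finset.sum_congr rfl
        intro t ht
        rw [mem_filter] at ht
        simp only [hcdef, if_pos ht.2]
      have e2 : (∑ t ∈ univ.filter (fun t => x t ⬝ᵥ θs > y t), c t)
          = ∑ t ∈ univ.filter (fun t => x t ⬝ᵥ θs > y t), a t := by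
        apply Finset.sum_congr rfl
        intro t ht
        rw [mem_filter] at ht
        simp only [hcdef, if_neg (ne_of_gt ht.2), if_pos ht.2]
      have e3 : (∑ t ∈ univ.filter (fun t => x t ⬝ᵥ θs < y t), c t)
          = ∑ t ∈ univ.filter (fun t => x t ⬝ᵥ θs < y t), -a t := by
        apply Finset.sum_congr rfl
        intro t ht
        rw [mem_filter] at ht
        simp only [hcdef, if_neg (ne_of_lt ht.2), if_neg (not_lt.mpr ht.2.le)]
      rw [e1, e2, e3, Finset.sum_neg_distrib] at hc0
      linarith
    intro η
    have h1 := key η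
    have h2 := key (-η)
    simp only [neg_dotProduct, Finset.sum_neg_distrib, abs_neg] at h2
    rw [abs_le]
    constructor <;> linarith
  · intro hcond θ
    set η : Fin n → ℝ := fun i => θ i - θs i with hηdef
    have hηx : ∀ t, η ⬝ᵥ x t = x t ⬝ᵥ θ - x t ⬝ᵥ θs := by
      intro t
      rw [dotProduct_comm]
      simp [dotProduct, hηdef, Finset.sum_sub_distrib, mul_sub]
    have hc := hcond η
    rw [abs_le] at hc
    rw [sum_split3 (fun t => x t ⬝ᵥ θs) y (fun t => |y t - x t ⬝ᵥ θs|),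
        sum_split3 (fun t => x t ⬝ᵥ θs) y (fun t => |y t - x t ⬝ᵥ θ|)]
    have e0 : (∑ t ∈ univ.filter (fun t => x t ⬝ᵥ θs = y t), |y t - x t ⬝ᵥ θs|) = 0 := by
      apply Finset.sum_eq_zero
      intro t ht
      rw [mem_filter] at ht
      rw [ht.2, sub_self, abs_zero]
    have S1 : (∑ t ∈ univ.filter (fun t => x t ⬝ᵥ θs = y t), |η ⬝ᵥ x t|)
        ≤ ∑ t ∈ univ.filter (fun t => x t ⬝ᵥ θs = y t), |y t - x t ⬝ᵥ θ| := by
      apply Finset.sum_le_sum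
      intro t ht
      rw [mem_filter] at ht
      have : y t - x t ⬝ᵥ θ = -(η ⬝ᵥ x t) := by rw [hηx t, ← ht.2]; ring
      rw [this, abs_neg]
    have S2 : (∑ t ∈ univ.filter (fun t => x t ⬝ᵥ θs > y t),
          (|y t - x t ⬝ᵥ θs| + η ⬝ᵥ x t))
        ≤ ∑ t ∈ univ.filter (fun t => x t ⬝ᵥ θs > y t), |y t - x t ⬝ᵥ θ| := by
      apply Finset.sum_le_sum
      intro t ht
      rw [mem_filter] at ht
      have h1 : |y t - x t ⬝ᵥ θs| = -(y t - x t ⬝ᵥ θs) := abs_of_neg (by linarith [ht.2])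
      have h2 : -(y t - x t ⬝ᵥ θ) ≤ |y t - x t ⬝ᵥ θ| := neg_le_abs _
      rw [h1, hηx t]
      linarith
    have S3 : (∑ t ∈ univ.filter (fun t => x t ⬝ᵥ θs < y t),
          (|y t - x t ⬝ᵥ θs| - η ⬝ᵥ x t))
        ≤ ∑ t ∈ univ.filter (fun t => x t ⬝ᵥ θs < y t), |y t - x t ⬝ᵥ θ| := by
      apply Finset.sum_le_sum
      intro t ht
      rw [mem_filter] at ht
      have h1 : |y t - x t ⬝ᵥ θs| = y t - x t ⬝ᵥ θs := abs_of_pos (by linarith [ht.2])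
      have h2 : y t - x t ⬝ᵥ θ ≤ |y t - x t ⬝ᵥ θ| := le_abs_self _
      rw [h1, hηx t]
      linarith
    rw [Finset.sum_add_distrib] at S2
    rw [Finset.sum_sub_distrib] at S3
    linarith
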